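/- For every 1 ≤ p < ∞, every f ∈ L^p(G_m) and every n ∈ ℕ, one has ∫_{G_m} ‖f(·+t) − f‖_{L^p(G_m)} · |K_{M_n}(t)| dμ(t) ≤ R² Σ_{s=0}^{n} (M_s/M_n) ω_p(1/M_s, f). -/

import Mathlib

open MeasureTheory Filter Finset Asymptotics ENNReal NNReal

noncomputable section

namespace VilenkinPaper

/-- The Vilenkin group `G_m = ∏_k ℤ_{m_k}`. -/
abbrev G (m : ℕ → ℕ) : Type := ∀ k, ZMod (m k)

/-- The generalized powers `M_0 = 1`, `M_{k+1} = m_k M_k`. -/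
def M (m : ℕ → ℕ) : ℕ → ℕ
  | 0 => 1
  | k + 1 => m k * M m k

/-- The basic neighborhoods `I_n = {y : y_0 = ⋯ = y_{n-1} = 0}`. -/
def I (m : ℕ → ℕ) (n : ℕ) : Set (G m) := {y | ∀ k < n, y k = 0}

/-- The generalized Rademacher functions `r_k(x) = exp(2πi x_k / m_k)`. -/
def rad (m : ℕ → ℕ) (k : ℕ) (x : G m) : ℂ :=
  Complex.exp (2 * Real.pi * Complex.I * ((x k).val : ℂ) / (m k : ℂ))

/-- The `j`-th digit of `n` in the base determined by `m`. -/
def digit (m : ℕ → ℕ) (n j : ℕ) : ℕ := (n / M m j) % m j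

/-- The Vilenkin functions `ψ_n = ∏_k r_k^{n_k}`. -/
def psi (m : ℕ → ℕ) (n : ℕ) (x : G m) : ℂ :=
  ∏ᶠ k, rad m k x ^ digit m n k

/-- Vilenkin-Fourier coefficient `f̂(k) = ∫ f ψ̄_k dμ`. -/
def fourierCoeff (m : ℕ → ℕ) (μ : Measure (G m)) (f : G m → ℂ) (k : ℕ) : ℂ :=
  ∫ x, f x * (starRingEnd ℂ) (psi m k x) ∂μ

/-- Partial sums `S_n f = ∑_{k=0}^{n-1} f̂(k) ψ_k`. -/
def S (m : ℕ → ℕ) (μ : Measure (G m)) (n : ℕ) (f : G m → ℂ) (x : G m) : ℂ :=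
  ∑ k ∈ Finset.range n, fourierCoeff m μ f k * psi m k x

/-- Fejér means `σ_n f = (1/n) ∑_{k=1}^n S_k f`. -/
def sigma (m : ℕ → ℕ) (μ : Measure (G m)) (n : ℕ) (f : G m → ℂ) (x : G m) : ℂ :=
  (n : ℂ)⁻¹ * ∑ k ∈ Finset.Icc 1 n, S m μ k f x

/-- Dirichlet kernels `D_n = ∑_{k=0}^{n-1} ψ_k`. -/
def D (m : ℕ → ℕ) (n : ℕ) (x : G m) : ℂ := ∑ k ∈ Finset.range n, psi m k x

/-- Fejér kernels `K_n = (1/n) ∑_{k=1}^n D_k`. -/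
def K (m : ℕ → ℕ) (n : ℕ) (x : G m) : ℂ := (n : ℂ)⁻¹ * ∑ k ∈ Finset.Icc 1 n, D m k x

/-- Convolution `(g ∗ f)(x) = ∫ f(t) g(x - t) dμ(t)`. -/
def conv (m : ℕ → ℕ) (μ : Measure (G m)) (g f : G m → ℂ) (x : G m) : ℂ :=
  ∫ t, f t * g (x - t) ∂μ

/-- `Q_n = ∑_{k=0}^{n-1} q_k`. -/
def Q (q : ℕ → ℝ) (n : ℕ) : ℝ := ∑ k ∈ Finset.range n, q k

/-- Nörlund means `t_n f = (1/Q_n) ∑_{k=1}^n q_{n-k} S_k f`. -/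
def T (m : ℕ → ℕ) (μ : Measure (G m)) (q : ℕ → ℝ) (n : ℕ) (f : G m → ℂ) (x : G m) : ℂ :=
  ((Q q n : ℝ) : ℂ)⁻¹ * ∑ k ∈ Finset.Icc 1 n, ((q (n - k) : ℝ) : ℂ) * S m μ k f x

/-- The modulus of continuity `ω_p(1/M_n, f) = sup_{t ∈ I_n} ‖f(·+t) - f‖_p`. -/
def omega (m : ℕ → ℕ) (μ : Measure (G m)) (p : ℝ≥0∞) (f : G m → ℂ) (n : ℕ) : ℝ :=
  ⨆ t ∈ I m n, (eLpNorm (fun x => f (x + t) - f x) p μ).toReal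


attribute [local instance] Classical.propDecidable

section aux
variable {m : ℕ → ℕ} (hm : ∀ k, 2 ≤ m k)

lemma M_succ (n : ℕ) : M m (n + 1) = m n * M m n := rfl

include hm

lemma M_pos (n : ℕ) : 0 < M m n := by
  induction n with
  | zero => simp [M]
  | succ k ih => have := hm k; rw [M_succ]; exact Nat.mul_pos (by omega) ih

lemma M_dvd {a b : ℕ} (h : a ≤ b) : M m a ∣ M m b := by
  induction b with
  | zero => simpa [Nat.le_zero.mp h]
  | succ k ih =>
    rcases Nat.lt_or_ge a (k+1) with h' | h'
    · exact (ih (Nat.lt_succ_iff.mp h')).mul_left _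
    · have : a = k + 1 := le_antisymm h h'
      simp [this]

lemma M_le {a b : ℕ} (h : a ≤ b) : M m a ≤ M m b :=
  Nat.le_of_dvd (M_pos hm b) (M_dvd hm h)

lemma digit_eq_zero {l t : ℕ} {n : ℕ} (hl : l < M m n) (ht : n ≤ t) :
    digit m l t = 0 := by
  have : l < M m t := lt_of_lt_of_le hl (M_le hm ht)
  simp [digit, Nat.div_eq_of_lt this]

lemma digit_low {j l n t : ℕ} (hl : l < M m n) (ht : t < n) :
    digit m (j * M m n + l) t = digit m l t := by
  obtain ⟨c, hc⟩ := M_dvd hm (show t + 1 ≤ n from ht)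
  have hMt : 0 < M m t := M_pos hm t
  have hMn : M m n = M m t * (m t * c) := by
    rw [hc, M_succ]; ring
  have h1 : (j * M m n + l) / M m t = l / M m t + j * c * m t := by
    rw [hMn]
    rw [show j * (M m t * (m t * c)) + l = l + (j * c * m t) * M m t by ring]
    rw [Nat.add_mul_div_right _ _ hMt]
  unfold digit
  rw [h1, Nat.add_mul_mod_self_right]

lemma digit_mid {j l n : ℕ} (hj : j < m n) (hl : l < M m n) :
    digit m (j * M m n + l) n = j := by
  unfold digit
  rw [show j * M m n + l = l + j * M m n by ring,
    Nat.add_mul_div_right _ _ (M_pos hm n), Nat.div_eq_of_lt hl, Nat.zero_add,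
    Nat.mod_eq_of_lt hj]

lemma jMl_lt {j l n : ℕ} (hj : j < m n) (hl : l < M m n) :
    j * M m n + l < M m (n + 1) := by
  calc j * M m n + l < j * M m n + M m n := by omega
  _ = (j + 1) * M m n := by ring
  _ ≤ m n * M m n := Nat.mul_le_mul_right _ (by omega)
  _ = M m (n+1) := (M_succ n).symm

lemma psi_eq_prod {l n : ℕ} (hl : l < M m n) (x : G m) :
    psi m l x = ∏ t ∈ Finset.range n, rad m t x ^ digit m l t := by
  apply finprod_eq_prod_of_mulSupport_subset
  intro k hk
  simp only [Function.mulSupport, Set.mem_setOf_eq] at hk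
  simp only [Finset.coe_range, Set.mem_Iio]
  by_contra h
  exact hk (by rw [digit_eq_zero hm hl (not_lt.mp h), pow_zero])

lemma psi_zero (x : G m) : psi m 0 x = 1 := by
  rw [psi_eq_prod hm (by simpa using M_pos hm 0) x]
  simp

lemma psi_mul {j l n : ℕ} (hj : j < m n) (hl : l < M m n) (x : G m) :
    psi m (j * M m n + l) x = rad m n x ^ j * psi m l x := by
  rw [psi_eq_prod hm (jMl_lt hm hj hl) x, Finset.prod_range_succ,
    digit_mid hm hj hl, psi_eq_prod hm hl x, mul_comm]
  congr 1
  exact Finset.prod_congr rfl fun t ht => by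
    rw [digit_low hm hl (Finset.mem_range.mp ht)]


omit hm in
lemma rad_eq (k : ℕ) (x : G m) :
    rad m k x = Complex.exp (((2 * Real.pi * (x k).val / (m k) : ℝ) : ℂ) * Complex.I) := by
  unfold rad
  congr 1
  push_cast
  ring

omit hm in
lemma norm_rad (k : ℕ) (x : G m) : ‖rad m k x‖ = 1 := by
  rw [rad_eq]
  exact Complex.norm_exp_ofReal_mul_I _

include hm

lemma rad_pow (k : ℕ) (x : G m) : rad m k x ^ (m k) = 1 := by
  have h2 := hm k
  have hk : (m k : ℂ) ≠ 0 := by exact_mod_cast (by omega : m k ≠ 0)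
  rw [rad_eq, ← Complex.exp_nat_mul]
  have : (m k : ℂ) * (((2 * Real.pi * (x k).val / (m k) : ℝ) : ℂ) * Complex.I)
      = ((x k).val : ℤ) * (2 * (Real.pi : ℂ) * Complex.I) := by
    push_cast
    field_simp
  rw [this, Complex.exp_int_mul_two_pi_mul_I]

lemma rad_eq_one_iff (k : ℕ) (x : G m) : rad m k x = 1 ↔ x k = 0 := by
  have h2 := hm k
  haveI : NeZero (m k) := ⟨by omega⟩
  have hm0 : (0:ℝ) < m k := by exact_mod_cast (by omega : 0 < m k)
  constructor
  · intro h
    rw [rad_eq, Complex.exp_eq_one_iff] at h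
    obtain ⟨j, hj⟩ := h
    have hj' : (((2 * Real.pi * (x k).val / (m k) : ℝ)) : ℂ) = (((j : ℝ) * (2 * Real.pi) : ℝ) : ℂ) := by
      apply mul_right_cancel₀ Complex.I_ne_zero
      rw [hj]; push_cast; ring
    have hre : 2 * Real.pi * (x k).val / (m k) = (j : ℝ) * (2 * Real.pi) :=
      Complex.ofReal_inj.mp hj'
    have hv : ((x k).val : ℝ) = (j : ℝ) * m k := by
      have h2pi : (2 * Real.pi) ≠ 0 := by
        have := Real.pi_ne_zero; positivity
      apply mul_left_cancel₀ h2pi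
      have : 2 * Real.pi * (((x k).val : ℝ) / (m k)) = 2 * Real.pi * (j:ℝ) := by
        rw [show 2 * Real.pi * (((x k).val:ℝ) / (m k)) = 2 * Real.pi * ((x k).val:ℝ) / (m k) by ring]
        rw [hre]; ring
      calc 2 * Real.pi * ((x k).val : ℝ) = (2 * Real.pi * (((x k).val:ℝ)/(m k))) * m k := by
            field_simp
      _ = (2 * Real.pi * (j:ℝ)) * m k := by rw [this]
      _ = 2 * Real.pi * ((j:ℝ) * m k) := by ring
    have hvlt : (x k).val < m k := ZMod.val_lt (x k)
    have hvltR := (Nat.cast_lt (α := ℝ)).mpr hvlt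
    have hvnn : (0:ℝ) ≤ ((x k).val : ℝ) := by positivity
    have hj0 : j = 0 := by
      rcases lt_trichotomy j 0 with h' | h' | h'
      · exfalso
        have hle : (j:ℝ) ≤ -1 := by exact_mod_cast (by omega : j ≤ -1)
        nlinarith
      · exact h'
      · exfalso
        have hge : (1:ℝ) ≤ (j:ℝ) := by exact_mod_cast h'
        nlinarith
    have : ((x k).val : ℝ) = 0 := by rw [hv, hj0]; simp
    have hv0 : (x k).val = 0 := by exact_mod_cast this
    exact (ZMod.val_eq_zero (x k)).mp hv0
  · intro h
    rw [rad_eq, h]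
    simp [ZMod.val_zero]

lemma geo (k : ℕ) (x : G m) :
    ∑ j ∈ Finset.range (m k), rad m k x ^ j = if x k = 0 then (m k : ℂ) else 0 := by
  by_cases h : x k = 0
  · simp [h, (rad_eq_one_iff hm k x).mpr h]
  · rw [if_neg h, geom_sum_eq (fun h1 => h ((rad_eq_one_iff hm k x).mp h1)) (m k),
      rad_pow hm k x]
    simp


def V (m : ℕ → ℕ) (s : Finset ℕ) : Set (G m) := {x | ∀ k ∈ s, x k = 0}
def A (m : ℕ → ℕ) (n : ℕ) (x : G m) : ℂ := ∑ k ∈ Finset.range (M m n), D m k x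

omit hm in
lemma sum_range_mul {β : Type*} [AddCommMonoid β] (f : ℕ → β) (a b : ℕ) :
    ∑ k ∈ Finset.range (a * b), f k = ∑ j ∈ Finset.range a, ∑ l ∈ Finset.range b, f (j * b + l) := by
  induction a with
  | zero => simp
  | succ a ih =>
    rw [show (a+1)*b = a*b + b by ring, Finset.sum_range_add, ih, Finset.sum_range_succ]

omit hm in
lemma mem_I_succ {n : ℕ} {x : G m} : x ∈ I m (n+1) ↔ x ∈ I m n ∧ x n = 0 := by
  constructor
  · intro h; exact ⟨fun k hk => h k (by omega), h n (by omega)⟩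
  · rintro ⟨h1, h2⟩ k hk
    rcases Nat.lt_or_ge k n with h' | h'
    · exact h1 k h'
    · have : k = n := by omega
      rw [this]; exact h2

lemma D_add {j l n : ℕ} (hj : j < m n) (hl : l ≤ M m n) (x : G m) :
    D m (j * M m n + l) x = D m (j * M m n) x + rad m n x ^ j * D m l x := by
  unfold D
  rw [Finset.sum_range_add, Finset.mul_sum]
  congr 1
  exact Finset.sum_congr rfl fun i hi =>
    psi_mul hm hj (lt_of_lt_of_le (Finset.mem_range.mp hi) hl) x

lemma D_MB (n : ℕ) (x : G m) :
    D m (M m n) x = if x ∈ I m n then (M m n : ℂ) else 0 := by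
  induction n with
  | zero =>
    have : (M m 0) = 1 := rfl
    rw [this]
    have hx : x ∈ I m 0 := fun k hk => by omega
    simp [D, hx, psi_zero hm]
  | succ n ih =>
    have hM : M m (n+1) = m n * M m n := rfl
    rw [hM]
    unfold D
    rw [sum_range_mul]
    have : ∀ j ∈ Finset.range (m n), ∑ l ∈ Finset.range (M m n), psi m (j * M m n + l) x
        = rad m n x ^ j * D m (M m n) x := by
      intro j hj
      rw [D, Finset.mul_sum]
      exact Finset.sum_congr rfl fun l hl =>
        psi_mul hm (Finset.mem_range.mp hj) (Finset.mem_range.mp hl) x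
    rw [Finset.sum_congr rfl this, ← Finset.sum_mul, geo hm, ih]
    by_cases h1 : x n = 0 <;> by_cases h2 : x ∈ I m n <;>
      simp [h1, h2, mem_I_succ, Nat.cast_mul]

lemma D_jM {n : ℕ} (x : G m) : ∀ j, j ≤ m n →
    D m (j * M m n) x = (∑ i ∈ Finset.range j, rad m n x ^ i) * D m (M m n) x := by
  intro j
  induction j with
  | zero => intro _; simp [D]
  | succ j ih =>
    intro hj
    rw [show (j+1) * M m n = j * M m n + M m n by ring,
      D_add hm (by omega) le_rfl x, ih (by omega), Finset.sum_range_succ]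
    ring

lemma A_rec (n : ℕ) (x : G m) :
    A m (n+1) x = (M m n : ℂ) *
      ((∑ j ∈ Finset.range (m n), ∑ i ∈ Finset.range j, rad m n x ^ i) * D m (M m n) x)
      + (∑ j ∈ Finset.range (m n), rad m n x ^ j) * A m n x := by
  unfold A
  rw [show M m (n+1) = m n * M m n from rfl, sum_range_mul]
  have step : ∀ j ∈ Finset.range (m n), ∑ l ∈ Finset.range (M m n), D m (j * M m n + l) x
      = (M m n : ℂ) * ((∑ i ∈ Finset.range j, rad m n x ^ i) * D m (M m n) x)
        + rad m n x ^ j * ∑ k ∈ Finset.range (M m n), D m k x := by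
    intro j hj
    have : ∀ l ∈ Finset.range (M m n), D m (j * M m n + l) x
        = D m (j * M m n) x + rad m n x ^ j * D m l x := fun l hl =>
      D_add hm (Finset.mem_range.mp hj) (le_of_lt (Finset.mem_range.mp hl)) x
    rw [Finset.sum_congr rfl this, Finset.sum_add_distrib, Finset.sum_const,
      Finset.card_range, ← Finset.mul_sum, nsmul_eq_mul,
      D_jM hm x j (le_of_lt (Finset.mem_range.mp hj))]
  rw [Finset.sum_congr rfl step, Finset.sum_add_distrib, ← Finset.mul_sum, ← Finset.sum_mul,
    ← Finset.sum_mul]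

omit hm in
lemma V_range (n : ℕ) : V m (Finset.range n) = I m n := by
  ext x; simp [V, I, Finset.mem_range]

omit hm in
lemma range_succ_sdiff (n : ℕ) : Finset.range (n+1) \ {n} = Finset.range n := by
  ext k; simp [Finset.mem_range]; omega

omit hm in
lemma range_succ_sdiff_lt {t n : ℕ} (ht : t < n) :
    Finset.range (n+1) \ {t} = insert n (Finset.range n \ {t}) := by
  ext k; simp [Finset.mem_range]; omega

omit hm in
lemma mem_V_insert {a : ℕ} {s : Finset ℕ} {x : G m} :
    x ∈ V m (insert a s) ↔ x ∈ V m s ∧ x a = 0 := by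
  constructor
  · intro h
    exact ⟨fun k hk => h k (Finset.mem_insert_of_mem hk), h a (Finset.mem_insert_self a s)⟩
  · rintro ⟨h1, h2⟩ k hk
    rcases Finset.mem_insert.mp hk with h | h
    · rw [h]; exact h2
    · exact h1 k h

lemma normA_le (n : ℕ) (x : G m) :
    ‖A m n x‖ ≤ ∑ t ∈ Finset.range n,
      (if x ∈ V m (Finset.range n \ {t}) then
        (M m t : ℝ) * (M m n : ℝ) * ((m t : ℝ) - 1) else 0) := by
  induction n with
  | zero =>
    have : A m 0 x = D m 0 x := by
      unfold A
      rw [show M m 0 = 1 from rfl]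
      simp
    simp [this, D]
  | succ n ih =>
    have hmn := hm n
    rw [A_rec hm]
    refine le_trans (norm_add_le _ _) ?_
    have hD : ‖D m (M m n) x‖ = (if x ∈ I m n then (M m n : ℝ) else 0) := by
      rw [D_MB hm]
      by_cases h : x ∈ I m n <;> simp [h]
    have hs0 : ‖∑ j ∈ Finset.range (m n), rad m n x ^ j‖
        = (if x n = 0 then (m n : ℝ) else 0) := by
      rw [geo hm]
      by_cases h : x n = 0 <;> simp [h]
    have hc : ‖∑ j ∈ Finset.range (m n), ∑ i ∈ Finset.range j, rad m n x ^ i‖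
        ≤ (m n : ℝ) * ((m n : ℝ) - 1) := by
      refine le_trans (norm_sum_le _ _) ?_
      have : ∀ j ∈ Finset.range (m n), ‖∑ i ∈ Finset.range j, rad m n x ^ i‖
          ≤ ((m n : ℝ) - 1) := by
        intro j hj
        refine le_trans (norm_sum_le _ _) ?_
        have : ∀ i ∈ Finset.range j, ‖rad m n x ^ i‖ = 1 := fun i _ => by
          rw [norm_pow, norm_rad, one_pow]
        rw [Finset.sum_congr rfl this, Finset.sum_const, Finset.card_range, nsmul_eq_mul,
          mul_one]
        have : (j : ℝ) ≤ (m n : ℝ) - 1 := by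
          have := Finset.mem_range.mp hj
          have : (j:ℝ) + 1 ≤ (m n : ℝ) := by exact_mod_cast this
          linarith
        exact this
      refine le_trans (Finset.sum_le_sum this) ?_
      rw [Finset.sum_const, Finset.card_range, nsmul_eq_mul]
    rw [Finset.sum_range_succ]
    have goal1 : ‖(M m n : ℂ) *
        ((∑ j ∈ Finset.range (m n), ∑ i ∈ Finset.range j, rad m n x ^ i) * D m (M m n) x)‖
        ≤ (if x ∈ V m (Finset.range (n+1) \ {n}) then
            (M m n : ℝ) * (M m (n+1) : ℝ) * ((m n : ℝ) - 1) else 0) := by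
      rw [range_succ_sdiff, V_range]
      rw [norm_mul, norm_mul, hD, Complex.norm_natCast]
      by_cases h : x ∈ I m n
      · simp only [h, if_true]
        have hMn : (0:ℝ) ≤ (M m n : ℝ) := by positivity
        have : (M m (n+1) : ℝ) = (m n : ℝ) * (M m n : ℝ) := by
          rw [show M m (n+1) = m n * M m n from rfl]; push_cast; ring
        rw [this]
        calc (M m n : ℝ) * (‖∑ j ∈ Finset.range (m n), ∑ i ∈ Finset.range j, rad m n x ^ i‖
              * (M m n : ℝ))
            ≤ (M m n : ℝ) * (((m n : ℝ) * ((m n : ℝ) - 1)) * (M m n : ℝ)) := by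
              have h1 : (0:ℝ) ≤ (M m n : ℝ) := hMn
              gcongr
          _ = (M m n : ℝ) * ((m n : ℝ) * (M m n : ℝ)) * ((m n : ℝ) - 1) := by ring
      · simp [h]
    have goal2 : ‖(∑ j ∈ Finset.range (m n), rad m n x ^ j) * A m n x‖
        ≤ ∑ t ∈ Finset.range n,
          (if x ∈ V m (Finset.range (n+1) \ {t}) then
            (M m t : ℝ) * (M m (n+1) : ℝ) * ((m t : ℝ) - 1) else 0) := by
      rw [norm_mul, hs0]
      by_cases hx : x n = 0
      · simp only [hx, if_true]
        calc (m n : ℝ) * ‖A m n x‖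
            ≤ (m n : ℝ) * ∑ t ∈ Finset.range n,
              (if x ∈ V m (Finset.range n \ {t}) then
                (M m t : ℝ) * (M m n : ℝ) * ((m t : ℝ) - 1) else 0) := by
              have : (0:ℝ) ≤ (m n : ℝ) := by positivity
              exact mul_le_mul_of_nonneg_left ih this
          _ = ∑ t ∈ Finset.range n,
              (if x ∈ V m (Finset.range (n+1) \ {t}) then
                (M m t : ℝ) * (M m (n+1) : ℝ) * ((m t : ℝ) - 1) else 0) := by
              rw [Finset.mul_sum]
              refine Finset.sum_congr rfl fun t ht => ?_
              rw [range_succ_sdiff_lt (Finset.mem_range.mp ht)]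
              have hmem : x ∈ V m (insert n (Finset.range n \ {t}))
                  ↔ x ∈ V m (Finset.range n \ {t}) := by
                rw [mem_V_insert]
                exact ⟨fun h => h.1, fun h => ⟨h, hx⟩⟩
              by_cases h : x ∈ V m (Finset.range n \ {t})
              · rw [if_pos h, if_pos (hmem.mpr h)]
                have : (M m (n+1) : ℝ) = (m n : ℝ) * (M m n : ℝ) := by
                  rw [show M m (n+1) = m n * M m n from rfl]; push_cast; ring
                rw [this]; ring
              · rw [if_neg h, if_neg (fun hh => h (hmem.mp hh)), mul_zero]
      · simp only [hx, if_false, zero_mul]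
        refine Finset.sum_nonneg fun t _ => ?_
        by_cases h : x ∈ V m (Finset.range (n+1) \ {t})
        · rw [if_pos h]
          have h1 : (1:ℝ) ≤ (M m t : ℝ) := by exact_mod_cast M_pos hm t
          have h2 : (1:ℝ) ≤ (M m (n+1) : ℝ) := by exact_mod_cast M_pos hm (n+1)
          have h3 : (1:ℝ) ≤ (m t : ℝ) := by
            have := hm t; exact_mod_cast by omega
          exact mul_nonneg (mul_nonneg (by linarith) (by linarith)) (by linarith)
        · rw [if_neg h]
    calc _ ≤ _ := add_le_add goal1 goal2
    _ = _ := by ring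

lemma K_M_eq (n : ℕ) (x : G m) :
    K m (M m n) x = (M m n : ℂ)⁻¹ * (A m n x + D m (M m n) x) := by
  unfold K
  congr 1
  have h0 : D m 0 x = 0 := by simp [D]
  have hins : Finset.range (M m n + 1) = insert 0 (Finset.Icc 1 (M m n)) := by
    ext k; simp; omega
  have h1 : ∑ k ∈ Finset.range (M m n + 1), D m k x
      = D m 0 x + ∑ k ∈ Finset.Icc 1 (M m n), D m k x := by
    rw [hins, Finset.sum_insert (by simp)]
  rw [Finset.sum_range_succ] at h1
  rw [h0, zero_add] at h1
  rw [← h1]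
  rfl


omit hm in
lemma measurableSet_V (s : Finset ℕ) : MeasurableSet (V m s) := by
  have : V m s = ⋂ k ∈ (s : Set ℕ), {x : G m | x k = 0} := by
    ext x; simp [V]
  rw [this]
  exact MeasurableSet.biInter s.countable_toSet
    (fun k _ => (measurable_pi_apply k) (MeasurableSet.singleton 0))

section meas
variable (μ : Measure (G m)) [IsProbabilityMeasure μ] [μ.IsAddHaarMeasure]

lemma measV (s : Finset ℕ) : μ (V m s) * ∏ k ∈ s, (m k : ℝ≥0∞) = 1 := by
  classical
  induction s using Finset.induction_on with
  | empty =>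
    have : V m (∅ : Finset ℕ) = Set.univ := by ext x; simp [V]
    simp [this]
  | @insert a s ha ih =>
    haveI : NeZero (m a) := ⟨by have := hm a; omega⟩
    set T := V m (insert a s) with hT
    have key : μ (V m s) = (m a : ℝ≥0∞) * μ T := by
      set e : ZMod (m a) → G m := fun v => Pi.single a v with he
      set C : ZMod (m a) → Set (G m) := fun v => (fun x => x - e v) ⁻¹' T with hC
      have hCv : ∀ v x, x ∈ C v ↔ x ∈ V m s ∧ x a = v := by
        intro v x
        have h1 : (x - e v) ∈ T ↔ (x - e v) ∈ V m s ∧ (x - e v) a = 0 := mem_V_insert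
        have h2 : (x - e v) a = x a - v := by
          simp [he, Pi.sub_apply, Pi.single_eq_same]
        have h3 : (x - e v) ∈ V m s ↔ x ∈ V m s := by
          constructor <;> intro h k hk
          · have hka : k ≠ a := fun hh => ha (hh ▸ hk)
            have := h k hk
            simpa [he, Pi.sub_apply, Pi.single_eq_of_ne hka] using this
          · have hka : k ≠ a := fun hh => ha (hh ▸ hk)
            simpa [he, Pi.sub_apply, Pi.single_eq_of_ne hka] using h k hk
        simp only [hC, Set.mem_preimage]
        rw [h1, h2, h3, sub_eq_zero]
      have hunion : V m s = ⋃ v, C v := by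
        ext x
        simp only [Set.mem_iUnion]
        constructor
        · intro h; exact ⟨x a, (hCv (x a) x).mpr ⟨h, rfl⟩⟩
        · rintro ⟨v, hv⟩; exact ((hCv v x).mp hv).1
      have hdisj : Pairwise (Function.onFun Disjoint C) := by
        intro v w hvw
        refine Set.disjoint_left.mpr fun x hxv hxw => ?_
        have h1 := ((hCv v x).mp hxv).2
        have h2 := ((hCv w x).mp hxw).2
        exact hvw (h1 ▸ h2 ▸ rfl)
      have hCmeas : ∀ v, MeasurableSet (C v) := fun v =>
        (measurable_sub_const (e v)) (measurableSet_V (insert a s))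
      have hCμ : ∀ v, μ (C v) = μ T := by
        intro v
        have : (fun x : G m => x - e v) = (fun x : G m => (-(e v)) + x) := by
          funext x; rw [sub_eq_neg_add]
        simp only [hC]
        rw [this, measure_preimage_add]
      rw [hunion, measure_iUnion hdisj hCmeas, tsum_fintype]
      rw [Finset.sum_congr rfl (fun v _ => hCμ v), Finset.sum_const, Finset.card_univ,
        ZMod.card, nsmul_eq_mul]
    rw [Finset.prod_insert ha, ← mul_assoc, mul_comm (μ T) ((m a : ℝ≥0∞)), ← key]
    exact ih

lemma measV_toReal (s : Finset ℕ) :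
    (μ (V m s)).toReal * ∏ k ∈ s, (m k : ℝ) = 1 := by
  have h := measV hm μ s
  have := congrArg ENNReal.toReal h
  rw [ENNReal.toReal_mul, ENNReal.toReal_prod] at this
  simpa using this

end meas

omit hm in
lemma M_eq_prodR (n : ℕ) : (M m n : ℝ) = ∏ k ∈ Finset.range n, (m k : ℝ) := by
  induction n with
  | zero => simp [M]
  | succ k ih =>
    rw [Finset.prod_range_succ, ← ih, show M m (k+1) = m k * M m k from rfl]
    push_cast
    ring

end aux

section om
variable {m : ℕ → ℕ}
variable (μ : Measure (G m)) [IsProbabilityMeasure μ] [μ.IsAddHaarMeasure]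
variable {p : ℝ≥0∞} {f : G m → ℂ}

lemma omega_nonneg (s : ℕ) : 0 ≤ omega m μ p f s :=
  Real.iSup_nonneg fun _ => Real.iSup_nonneg fun _ => ENNReal.toReal_nonneg

lemma le_omega (hf : MemLp f p μ) (hp : 1 ≤ p) {s : ℕ} {x : G m} (hx : x ∈ I m s) :
    (eLpNorm (fun y => f (y + x) - f y) p μ).toReal ≤ omega m μ p f s := by
  have hmp : ∀ t : G m, MeasurePreserving (fun y : G m => y + t) μ μ :=
    fun t => measurePreserving_add_right μ t
  have hC : ∀ t : G m, eLpNorm (fun y => f (y + t) - f y) p μ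
      ≤ eLpNorm f p μ + eLpNorm f p μ := by
    intro t
    have h1 : AEStronglyMeasurable (fun y : G m => f (y + t)) μ :=
      hf.1.comp_measurePreserving (hmp t)
    have h2 : eLpNorm (fun y : G m => f (y + t)) p μ = eLpNorm f p μ :=
      eLpNorm_comp_measurePreserving hf.1 (hmp t)
    calc eLpNorm (fun y => f (y + t) - f y) p μ
        = eLpNorm ((fun y : G m => f (y + t)) - f) p μ := rfl
      _ ≤ eLpNorm (fun y : G m => f (y + t)) p μ + eLpNorm f p μ :=
          eLpNorm_sub_le h1 hf.1 hp
      _ = _ := by rw [h2]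
  have hfin : eLpNorm f p μ + eLpNorm f p μ < ⊤ :=
    ENNReal.add_lt_top.mpr ⟨hf.eLpNorm_lt_top, hf.eLpNorm_lt_top⟩
  have hCr : ∀ t : G m, (eLpNorm (fun y => f (y + t) - f y) p μ).toReal
      ≤ (eLpNorm f p μ + eLpNorm f p μ).toReal :=
    fun t => ENNReal.toReal_mono hfin.ne (hC t)
  have hb : BddAbove (Set.range fun t : G m =>
      ⨆ _ : t ∈ I m s, (eLpNorm (fun y => f (y + t) - f y) p μ).toReal) := by
    refine ⟨(eLpNorm f p μ + eLpNorm f p μ).toReal, ?_⟩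
    rintro y ⟨t, rfl⟩
    exact Real.iSup_le (fun _ => hCr t) ENNReal.toReal_nonneg
  have h1 := le_ciSup hb x
  rwa [ciSup_pos hx] at h1

end om

/-- integral estimate for the Fejér kernel `K_(M_n)`. -/
theorem fejer_kernel_Mn_integral_estimate
    (m : ℕ → ℕ) (hm : ∀ k, 2 ≤ m k)
    (R : ℝ) (hR : IsLUB (Set.range fun k => (m k : ℝ)) R)
    (μ : Measure (G m)) [IsProbabilityMeasure μ] [μ.IsAddHaarMeasure]
    (p : ℝ≥0∞) (hp : 1 ≤ p) (hp' : p ≠ ∞)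
    (f : G m → ℂ) (hf : MemLp f p μ) (n : ℕ) :
    ∫ t, (eLpNorm (fun x => f (x + t) - f x) p μ).toReal * ‖K m (M m n) t‖ ∂μ ≤
      R ^ 2 * ∑ s ∈ Finset.range (n + 1), ((M m s : ℝ) / (M m n : ℝ)) * omega m μ p f s := by
  classical
  have hmR : ∀ k, (m k : ℝ) ≤ R := fun k => hR.1 ⟨k, rfl⟩
  have hR2 : (2:ℝ) ≤ R := le_trans (by exact_mod_cast hm 0) (hmR 0)
  have hR0 : (0:ℝ) ≤ R := by linarith
  have hNpos : 0 < M m n := M_pos hm n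
  have hNR : (0:ℝ) < ((M m n : ℕ):ℝ) := by exact_mod_cast hNpos
  set g : G m → ℝ := (fun t => (eLpNorm (fun x => f (x + t) - f x) p μ).toReal) with hg
  set H : G m → ℝ := (fun x =>
    Set.indicator (I m n) (fun _ => omega m μ p f n) x
    + ∑ t ∈ Finset.range n, Set.indicator (V m (Finset.range n \ {t}))
        (fun _ => (M m t : ℝ) * ((m t : ℝ) - 1) * omega m μ p f t) x) with hH
  have key : ∀ x, g x * ‖K m (M m n) x‖ ≤ H x := by
    intro x
    have hg0 : 0 ≤ g x := ENNReal.toReal_nonneg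
    have hKb : ‖K m (M m n) x‖ ≤ (((M m n : ℕ)):ℝ)⁻¹ * (‖A m n x‖ + ‖D m (M m n) x‖) := by
      rw [K_M_eq hm n x, norm_mul, norm_inv, Complex.norm_natCast]
      exact mul_le_mul_of_nonneg_left (norm_add_le _ _) (by positivity)
    have piece2 : (((M m n : ℕ)):ℝ)⁻¹ * (g x * ‖D m (M m n) x‖)
        ≤ Set.indicator (I m n) (fun _ => omega m μ p f n) x := by
      rw [D_MB hm]
      by_cases hx : x ∈ I m n
      · rw [if_pos hx, Set.indicator_of_mem hx, Complex.norm_natCast]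
        have heq : (((M m n : ℕ)):ℝ)⁻¹ * (g x * ((M m n : ℕ):ℝ)) = g x := by
          field_simp
        rw [heq]
        exact le_omega μ hf hp hx
      · rw [if_neg hx, Set.indicator_of_notMem hx]
        simp
    have piece1 : (((M m n : ℕ)):ℝ)⁻¹ * (g x * ‖A m n x‖)
        ≤ ∑ t ∈ Finset.range n, Set.indicator (V m (Finset.range n \ {t}))
            (fun _ => (M m t : ℝ) * ((m t : ℝ) - 1) * omega m μ p f t) x := by
      have h1 : g x * ‖A m n x‖ ≤ g x * ∑ t ∈ Finset.range n,
          (if x ∈ V m (Finset.range n \ {t}) then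
            (M m t : ℝ) * (M m n : ℝ) * ((m t : ℝ) - 1) else 0) :=
        mul_le_mul_of_nonneg_left (normA_le hm n x) hg0
      have h2 : g x * ∑ t ∈ Finset.range n,
          (if x ∈ V m (Finset.range n \ {t}) then
            (M m t : ℝ) * (M m n : ℝ) * ((m t : ℝ) - 1) else 0)
          ≤ ∑ t ∈ Finset.range n, ((M m n : ℕ):ℝ) * Set.indicator (V m (Finset.range n \ {t}))
            (fun _ => (M m t : ℝ) * ((m t : ℝ) - 1) * omega m μ p f t) x := by
        rw [Finset.mul_sum]
        refine Finset.sum_le_sum fun t ht => ?_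
        have htn := Finset.mem_range.mp ht
        by_cases hx : x ∈ V m (Finset.range n \ {t})
        · rw [if_pos hx, Set.indicator_of_mem hx]
          have hVI : x ∈ I m t := by
            intro k hk
            exact hx k (by simp only [Finset.mem_sdiff, Finset.mem_range,
              Finset.mem_singleton]; omega)
          have hgx : g x ≤ omega m μ p f t := le_omega μ hf hp hVI
          have hnn : (0:ℝ) ≤ (M m t : ℝ) * ((m t : ℝ) - 1) := by
            have h1' : (1:ℝ) ≤ (M m t : ℝ) := by exact_mod_cast M_pos hm t
            have h3' : (1:ℝ) ≤ (m t : ℝ) := by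
              have := hm t; exact_mod_cast by omega
            nlinarith
          calc g x * ((M m t : ℝ) * (M m n : ℝ) * ((m t : ℝ) - 1))
              = ((M m n : ℕ):ℝ) * ((M m t : ℝ) * ((m t : ℝ) - 1)) * g x := by ring
            _ ≤ ((M m n : ℕ):ℝ) * ((M m t : ℝ) * ((m t : ℝ) - 1)) * omega m μ p f t := by
                have : (0:ℝ) ≤ ((M m n : ℕ):ℝ) * ((M m t : ℝ) * ((m t : ℝ) - 1)) := by
                  positivity
                exact mul_le_mul_of_nonneg_left hgx this
            _ = ((M m n : ℕ):ℝ) * ((M m t : ℝ) * ((m t : ℝ) - 1) * omega m μ p f t) := by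
                ring
        · rw [if_neg hx, Set.indicator_of_notMem hx]
          simp
      have h3 := le_trans h1 h2
      calc (((M m n : ℕ)):ℝ)⁻¹ * (g x * ‖A m n x‖)
          ≤ (((M m n : ℕ)):ℝ)⁻¹ * ∑ t ∈ Finset.range n,
            ((M m n : ℕ):ℝ) * Set.indicator (V m (Finset.range n \ {t}))
              (fun _ => (M m t : ℝ) * ((m t : ℝ) - 1) * omega m μ p f t) x :=
            mul_le_mul_of_nonneg_left h3 (by positivity)
        _ = _ := by
            rw [← Finset.mul_sum, ← mul_assoc, inv_mul_cancel₀ (ne_of_gt hNR), one_mul]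
    calc g x * ‖K m (M m n) x‖
        ≤ g x * ((((M m n : ℕ)):ℝ)⁻¹ * (‖A m n x‖ + ‖D m (M m n) x‖)) :=
          mul_le_mul_of_nonneg_left hKb hg0
      _ = (((M m n : ℕ)):ℝ)⁻¹ * (g x * ‖A m n x‖)
          + (((M m n : ℕ)):ℝ)⁻¹ * (g x * ‖D m (M m n) x‖) := by ring
      _ ≤ H x := by
          rw [hH]
          have := add_le_add piece1 piece2
          linarith [this]
  have hVmeas : ∀ t : ℕ, MeasurableSet (V m (Finset.range n \ {t})) :=
    fun t => measurableSet_V _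
  have hImeas : MeasurableSet (I m n) := by
    rw [← V_range]; exact measurableSet_V _
  have hint1 : Integrable ((I m n).indicator (fun _ => omega m μ p f n)) μ :=
    (integrable_const _).indicator hImeas
  have hint2 : ∀ t ∈ Finset.range n, Integrable ((V m (Finset.range n \ {t})).indicator
      (fun _ => (M m t : ℝ) * ((m t : ℝ) - 1) * omega m μ p f t)) μ :=
    fun t _ => (integrable_const _).indicator (hVmeas t)
  have hHint : Integrable H μ := by
    rw [hH]
    exact Integrable.add hint1 (integrable_finset_sum _ hint2)
  have step2 : ∫ t, g t * ‖K m (M m n) t‖ ∂μ ≤ ∫ x, H x ∂μ :=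
    integral_mono_of_nonneg
      (Filter.Eventually.of_forall fun t =>
        mul_nonneg ENNReal.toReal_nonneg (norm_nonneg _))
      hHint (Filter.Eventually.of_forall key)
  have hIval : (μ (I m n)).toReal = ((M m n : ℕ):ℝ)⁻¹ := by
    rw [← V_range]
    have h := measV_toReal hm μ (Finset.range n)
    rw [← M_eq_prodR] at h
    field_simp
    linarith [h]
  have hVval : ∀ t, t < n → (μ (V m (Finset.range n \ {t}))).toReal
      = (m t : ℝ) / ((M m n : ℕ):ℝ) := by
    intro t ht
    have hmt : (0:ℝ) < (m t : ℝ) := by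
      have := hm t; exact_mod_cast by omega
    have h := measV_toReal hm μ (Finset.range n \ {t})
    have hprod : ∏ k ∈ Finset.range n \ {t}, (m k : ℝ) = (M m n : ℝ) / (m t : ℝ) := by
      have h1 : (m t : ℝ) * ∏ k ∈ (Finset.range n).erase t, (m k : ℝ)
          = ∏ k ∈ Finset.range n, (m k : ℝ) :=
        Finset.mul_prod_erase (Finset.range n) (fun k => (m k : ℝ)) (Finset.mem_range.mpr ht)
      rw [Finset.erase_eq] at h1
      rw [← M_eq_prodR] at h1
      field_simp
      linarith [h1]
    rw [hprod] at h
    field_simp at h ⊢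
    linarith [h]
  have step3 : ∫ x, H x ∂μ = omega m μ p f n * ((M m n : ℕ):ℝ)⁻¹
      + ∑ t ∈ Finset.range n, (M m t : ℝ) * ((m t : ℝ) - 1) * omega m μ p f t
        * ((m t : ℝ) / ((M m n : ℕ):ℝ)) := by
    rw [hH]
    rw [integral_add hint1 (integrable_finset_sum _ hint2)]
    rw [integral_finset_sum _ hint2]
    rw [integral_indicator_const _ hImeas]
    congr 1
    · rw [smul_eq_mul, measureReal_def, hIval]; ring
    · refine Finset.sum_congr rfl fun t ht => ?_
      rw [integral_indicator_const _ (hVmeas t), smul_eq_mul, measureReal_def,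
        hVval t (Finset.mem_range.mp ht)]
      ring
  have final : omega m μ p f n * ((M m n : ℕ):ℝ)⁻¹
      + ∑ t ∈ Finset.range n, (M m t : ℝ) * ((m t : ℝ) - 1) * omega m μ p f t
        * ((m t : ℝ) / ((M m n : ℕ):ℝ))
      ≤ R ^ 2 * ∑ s ∈ Finset.range (n + 1), ((M m s : ℝ) / (M m n : ℝ)) * omega m μ p f s := by
    rw [Finset.sum_range_succ, mul_add, Finset.mul_sum]
    have t1 : omega m μ p f n * ((M m n : ℕ):ℝ)⁻¹
        ≤ R ^ 2 * (((M m n : ℝ)) / (M m n : ℝ) * omega m μ p f n) := by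
      rw [div_self (ne_of_gt hNR)]
      have h1 : ((M m n : ℕ):ℝ)⁻¹ ≤ 1 := by
        rw [inv_le_one_iff₀]
        right
        exact_mod_cast hNpos
      have h2 : (1:ℝ) ≤ R ^ 2 := by nlinarith
      have h3 := omega_nonneg (m := m) μ (p := p) (f := f) n
      nlinarith
    have t2 : ∑ t ∈ Finset.range n, (M m t : ℝ) * ((m t : ℝ) - 1) * omega m μ p f t
        * ((m t : ℝ) / ((M m n : ℕ):ℝ))
        ≤ ∑ t ∈ Finset.range n, R ^ 2 * (((M m t : ℝ)) / (M m n : ℝ) * omega m μ p f t) := by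
      refine Finset.sum_le_sum fun t _ => ?_
      have h3 := omega_nonneg (m := m) μ (p := p) (f := f) t
      have hMt : (0:ℝ) < (M m t : ℝ) := by exact_mod_cast M_pos hm t
      have hmt1 : (1:ℝ) ≤ (m t : ℝ) := by
        have := hm t; exact_mod_cast by omega
      have hmtR : (m t : ℝ) ≤ R := hmR t
      have hkey : ((m t : ℝ) - 1) * (m t : ℝ) ≤ R ^ 2 := by nlinarith
      calc (M m t : ℝ) * ((m t : ℝ) - 1) * omega m μ p f t * ((m t : ℝ) / ((M m n : ℕ):ℝ))
          = (((m t : ℝ) - 1) * (m t : ℝ)) * ((M m t : ℝ) / ((M m n : ℕ):ℝ) * omega m μ p f t) := by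
            ring
        _ ≤ R ^ 2 * ((M m t : ℝ) / ((M m n : ℕ):ℝ) * omega m μ p f t) := by
            have hnn : (0:ℝ) ≤ (M m t : ℝ) / ((M m n : ℕ):ℝ) * omega m μ p f t := by
              positivity
            exact mul_le_mul_of_nonneg_right hkey hnn
    linarith [add_le_add t2 t1]
  calc ∫ t, (eLpNorm (fun x => f (x + t) - f x) p μ).toReal * ‖K m (M m n) t‖ ∂μ
      ≤ ∫ x, H x ∂μ := step2
    _ = _ := step3
    _ ≤ _ := final


end VilenkinPaper
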